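/- Let x, y ∈ ℂⁿ with x ≠ 0. There exists a Hermitian matrix Δ ∈ ℂ^{n×n} (Δ* = Δ) with Δx = y if and only if x*y is real (equivalently Im(y*x) = 0). Moreover, in that case the minimal spectral norm of such a Δ equals ‖y‖/‖x‖. -/

import Mathlib

set_option maxHeartbeats 1000000
set_option synthInstance.maxHeartbeats 400000

/-- The spectral (operator 2-) norm of a complex matrix. -/
noncomputable def specNorm {n : ℕ} (A : Matrix (Fin n) (Fin n) ℂ) : ℝ :=
  ‖Matrix.toEuclideanCLM (𝕜 := ℂ) A‖

/-- The Euclidean norm of a complex vector. -/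
noncomputable def evNorm {n : ℕ} (v : Fin n → ℂ) : ℝ :=
  ‖(WithLp.equiv 2 (Fin n → ℂ)).symm v‖

open Matrix

lemma mulVec_norm_le {n : ℕ} (A : Matrix (Fin n) (Fin n) ℂ) (v : Fin n → ℂ) :
    evNorm (A.mulVec v) ≤ specNorm A * evNorm v := by
  have h := (Matrix.toEuclideanCLM (𝕜 := ℂ) A).le_opNorm ((WithLp.equiv 2 (Fin n → ℂ)).symm v)
  exact h

lemma dot_self_eq {n : ℕ} (v : Fin n → ℂ) :
    star v ⬝ᵥ v = ((evNorm v : ℝ) : ℂ) ^ 2 := by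
  have h := EuclideanSpace.inner_toLp_toLp (𝕜 := ℂ) (ι := Fin n) v v
  rw [inner_self_eq_norm_sq_to_K] at h
  rw [dotProduct_comm, ← h]; rfl

lemma evNorm_pos {n : ℕ} {v : Fin n → ℂ} (h : v ≠ 0) : 0 < evNorm v := by
  rw [evNorm, norm_pos_iff]
  simpa using h

lemma evNorm_zero {n : ℕ} : evNorm (0 : Fin n → ℂ) = 0 := by
  rw [evNorm]
  simp

lemma herm_dot {n : ℕ} (x : Fin n → ℂ) (Δ : Matrix (Fin n) (Fin n) ℂ) (hH : Δᴴ = Δ) :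
    (star x ⬝ᵥ Δ.mulVec x).im = 0 := by
  have h : star x ⬝ᵥ Δ.mulVec x = star (star x ⬝ᵥ Δ.mulVec x) := by
    calc star x ⬝ᵥ Δ.mulVec x = star (star (Δ.mulVec x) ⬝ᵥ x) := star_dotProduct _ _
    _ = star (star x ᵥ* Δᴴ ⬝ᵥ x) := by rw [star_mulVec]
    _ = star (star x ⬝ᵥ Δᴴ *ᵥ x) := by rw [← dotProduct_mulVec]
    _ = star (star x ⬝ᵥ Δ *ᵥ x) := by rw [hH]
  have := congrArg Complex.im h
  simp only [Complex.star_def, Complex.conj_im] at this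
  linarith

lemma vmv_herm {n : ℕ} (v : Fin n → ℂ) : (vecMulVec v (star v))ᴴ = vecMulVec v (star v) := by
  ext i j
  simp [vecMulVec_apply, conjTranspose_apply, mul_comm]

lemma vmv_sq {n : ℕ} (v : Fin n → ℂ) :
    vecMulVec v (star v) * vecMulVec v (star v) = (star v ⬝ᵥ v) • vecMulVec v (star v) := by
  ext i j
  simp only [mul_apply, vecMulVec_apply, Matrix.smul_apply, smul_eq_mul, dotProduct, Pi.star_apply,
    Finset.sum_mul]
  exact Finset.sum_congr rfl fun k _ => by ring

lemma vmv_mulVec {n : ℕ} (v w : Fin n → ℂ) (u : Fin n → ℂ) :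
    (vecMulVec v w).mulVec u = (w ⬝ᵥ u) • v := by
  ext i
  simp only [vecMulVec_apply, mulVec, dotProduct, Pi.smul_apply, smul_eq_mul, Finset.sum_mul,
    Finset.mul_sum]
  exact Finset.sum_congr rfl fun k _ => by ring

lemma specNorm_smul {n : ℕ} (c : ℂ) (A : Matrix (Fin n) (Fin n) ℂ) :
    specNorm (c • A) = ‖c‖ * specNorm A := by
  rw [specNorm, _root_.map_smul]
  exact norm_smul c (Matrix.toEuclideanCLM (𝕜 := ℂ) A)

lemma specNorm_of_inv {n : ℕ} (hn : 0 < n) (R : Matrix (Fin n) (Fin n) ℂ)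
    (h : Rᴴ * R = 1) : specNorm R = 1 := by
  haveI : Nonempty (Fin n) := Fin.pos_iff_nonempty.mp hn
  haveI : Nontrivial (EuclideanSpace ℂ (Fin n)) := inferInstance
  set L := Matrix.toEuclideanCLM (𝕜 := ℂ) R with hL
  have h1 : star L * L = 1 := by
    rw [hL, ← map_star (Matrix.toEuclideanCLM (𝕜 := ℂ)),
      ← _root_.map_mul (Matrix.toEuclideanCLM (𝕜 := ℂ))]
    have : star R * R = 1 := h
    rw [this, _root_.map_one]
  have h2 : ‖L‖ * ‖L‖ = 1 := by
    rw [← CStarRing.norm_star_mul_self, h1, norm_one]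
  have h3 : 0 ≤ ‖L‖ := norm_nonneg _
  show ‖L‖ = 1
  nlinarith

lemma construction {n : ℕ} (x y : Fin n → ℂ) (hx : x ≠ 0) (h : (star x ⬝ᵥ y).im = 0) :
    ∃ Δ : Matrix (Fin n) (Fin n) ℂ,
      Δᴴ = Δ ∧ Δ.mulVec x = y ∧ specNorm Δ = evNorm y / evNorm x := by
  have hex : 0 < evNorm x := evNorm_pos hx
  obtain ⟨i, hi⟩ : ∃ i, x i ≠ 0 := by
    by_contra hc
    push_neg at hc
    exact hx (funext hc)
  have hn : 0 < n := i.pos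
  by_cases hy : y = 0
  · refine ⟨0, by simp, by simp [hy], ?_⟩
    rw [hy, evNorm_zero, zero_div, specNorm, _root_.map_zero, norm_zero]
  · have hey : 0 < evNorm y := evNorm_pos hy
    set ρ : ℝ := evNorm y / evNorm x with hρ
    have hρpos : 0 < ρ := div_pos hey hex
    set c : ℂ := ((evNorm x / evNorm y : ℝ) : ℂ) with hc
    have hxc : ((evNorm x : ℝ) : ℂ) ≠ 0 := Complex.ofReal_ne_zero.mpr (ne_of_gt hex)
    have hyc : ((evNorm y : ℝ) : ℂ) ≠ 0 := Complex.ofReal_ne_zero.mpr (ne_of_gt hey)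
    have hρc : (ρ : ℂ) * c = 1 := by
      rw [hc, hρ]
      push_cast
      field_simp
    set w : Fin n → ℂ := c • y with hw
    set v : Fin n → ℂ := x - w with hv
    -- star x ⬝ᵥ y is real
    have hre : star (star x ⬝ᵥ y) = star x ⬝ᵥ y := by
      rw [Complex.star_def, Complex.conj_eq_iff_im]
      exact h
    -- key dot product identities
    have hXw_real : star (star x ⬝ᵥ w) = star x ⬝ᵥ w := by
      rw [hw, dotProduct_smul, star_smul, hre]
      congr 1
      rw [hc]
      exact Complex.conj_ofReal _
    have hWx : star w ⬝ᵥ x = star x ⬝ᵥ w := by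
      rw [star_dotProduct]
      exact hXw_real
    have hWw : star w ⬝ᵥ w = star x ⬝ᵥ x := by
      rw [hw, star_smul, smul_dotProduct, dotProduct_smul, smul_smul, smul_eq_mul,
        dot_self_eq y, dot_self_eq x, hc, Complex.star_def, Complex.conj_ofReal]
      push_cast
      field_simp
    set σ : ℂ := star v ⬝ᵥ v with hσ
    set τ : ℂ := star v ⬝ᵥ x with hτ
    have hστ : σ = 2 * τ := by
      rw [hσ, hτ, hv, star_sub, sub_dotProduct, sub_dotProduct, dotProduct_sub, dotProduct_sub,
        hWw, hWx]
      ring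
    by_cases hv0 : v = 0
    · -- x = w, use ρ • 1
      have hxw : x = w := by
        have := hv ▸ hv0
        rwa [sub_eq_zero] at this
      refine ⟨((ρ : ℂ)) • 1, ?_, ?_, ?_⟩
      · rw [conjTranspose_smul, conjTranspose_one, Complex.star_def, Complex.conj_ofReal]
      · rw [smul_mulVec, one_mulVec, hxw, hw, smul_smul, hρc, one_smul]
      · rw [specNorm_smul, specNorm_of_inv hn 1 (by simp), mul_one, Complex.norm_real,
          Real.norm_eq_abs, abs_of_pos hρpos]
    · have hσv : σ = ((evNorm v : ℝ) : ℂ) ^ 2 := dot_self_eq v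
      have hσ0 : σ ≠ 0 := by
        rw [hσv]
        exact pow_ne_zero 2 (Complex.ofReal_ne_zero.mpr (ne_of_gt (evNorm_pos hv0)))
      have hσstar : star σ = σ := by
        rw [hσv, Complex.star_def, ← Complex.ofReal_pow, Complex.conj_ofReal]
      set P : Matrix (Fin n) (Fin n) ℂ := vecMulVec v (star v) with hP
      set R : Matrix (Fin n) (Fin n) ℂ := 1 - (2 / σ) • P with hR
      have hRH : Rᴴ = R := by
        rw [hR, conjTranspose_sub, conjTranspose_one, conjTranspose_smul, hP, vmv_herm]
        congr 1
        rw [star_div₀, hσstar]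
        norm_num
      have hRR : Rᴴ * R = 1 := by
        rw [hRH, hR, sub_mul, mul_sub, mul_sub, one_mul, mul_one, smul_mul_smul_comm, hP, vmv_sq,
          ← hσ, ← hP, smul_smul]
        have hs : 2 / σ * (2 / σ) * σ = 2 / σ + 2 / σ := by
          field_simp
          ring
        rw [hs, add_smul]
        simp only [one_mul]
        abel
      have hRx : R.mulVec x = w := by
        rw [hR, sub_mulVec, one_mulVec, smul_mulVec, hP, vmv_mulVec, ← hτ, smul_smul]
        have : 2 / σ * τ = 1 := by
          rw [div_mul_eq_mul_div, ← hστ]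
          exact div_self hσ0
        rw [this, one_smul, hv]
        abel
      refine ⟨((ρ : ℂ)) • R, ?_, ?_, ?_⟩
      · rw [conjTranspose_smul, hRH, Complex.star_def, Complex.conj_ofReal]
      · rw [smul_mulVec, hRx, hw, smul_smul, hρc, one_smul]
      · rw [specNorm_smul, specNorm_of_inv hn R hRR, mul_one, Complex.norm_real,
          Real.norm_eq_abs, abs_of_pos hρpos]

open Matrix in
/-- Hermitian mapping theorem: for `x ≠ 0` there is a Hermitian `Δ` with `Δx = y` iff
`x*y` is real, and in that case the minimal spectral norm of such `Δ` is `‖y‖/‖x‖`. -/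
theorem hermitian_mapping {n : ℕ} (x y : Fin n → ℂ) (hx : x ≠ 0) :
    ((∃ Δ : Matrix (Fin n) (Fin n) ℂ, Δᴴ = Δ ∧ Δ.mulVec x = y) ↔ (star x ⬝ᵥ y).im = 0) ∧
    ((star x ⬝ᵥ y).im = 0 →
      IsLeast {r : ℝ | ∃ Δ : Matrix (Fin n) (Fin n) ℂ,
          Δᴴ = Δ ∧ Δ.mulVec x = y ∧ specNorm Δ = r}
        (evNorm y / evNorm x)) := by
  have hex : 0 < evNorm x := evNorm_pos hx
  constructor
  · constructor
    · rintro ⟨Δ, hH, hm⟩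
      rw [← hm]
      exact herm_dot x Δ hH
    · intro h
      obtain ⟨Δ, h1, h2, _⟩ := construction x y hx h
      exact ⟨Δ, h1, h2⟩
  · intro h
    constructor
    · exact construction x y hx h
    · rintro r ⟨Δ, hH, hm, hns⟩
      have hle : evNorm y ≤ specNorm Δ * evNorm x := by
        rw [← hm]
        exact mulVec_norm_le Δ x
      rw [div_le_iff₀ hex, ← hns]
      exact hle
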